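/- Let Φ = (K_{p,q}, φ) be a T-gain graph on the complete bipartite graph K_{p,q}. Then the largest eigenvalue of A(Φ) satisfies λ_1(A(Φ)) ≤ sqrt(pq), with equality if and only if Φ is balanced. -/

import Mathlib

open scoped Classical

variable {V : Type*}

/-- The adjacency matrix of a `𝕋`-gain graph `Φ = (G, φ)`. -/
noncomputable def gainAdj [Fintype V] (G : SimpleGraph V) (φ : V → V → ℂ) :
    Matrix V V ℂ := fun i j => if G.Adj i j then φ i j else 0

/-- `φ` is a complex unit gain function on `G`: each gain is a unit complex number and
`φ(e_{ji}) = φ(e_{ij})⁻¹`. -/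
def IsGain (G : SimpleGraph V) (φ : V → V → ℂ) : Prop :=
  (∀ i j, G.Adj i j → ‖φ i j‖ = 1) ∧ (∀ i j, G.Adj i j → φ i j * φ j i = 1)

/-- The gain of a walk: the product of the gains of its (oriented) edges. -/
noncomputable def walkGain (φ : V → V → ℂ) {G : SimpleGraph V} {u v : V} (p : G.Walk u v) : ℂ :=
  (p.darts.map (fun d => φ d.toProd.1 d.toProd.2)).prod

/-- A gain graph is balanced if every cycle has gain `1`. -/
def IsBalanced (G : SimpleGraph V) (φ : V → V → ℂ) : Prop :=
  ∀ (v : V) (p : G.Walk v v), p.IsCycle → walkGain φ p = 1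

/-- `Σ_{C ∈ C_i(G)} Re(φ(C))`: each unoriented, unrooted cycle of length `i` corresponds to
exactly `2·i` rooted oriented cycle walks, all having the same real part of the gain. -/
noncomputable def cycleRSum (G : SimpleGraph V) (φ : V → V → ℂ) (i : ℕ) : ℝ :=
  (∑ᶠ q : {q : Σ' v : V, G.Walk v v // q.snd.IsCycle ∧ q.snd.length = i},
      (walkGain φ q.1.snd).re) / (2 * i)

set_option linter.unusedTactic false

open Matrix in
lemma eig_index {n : Type*} [Fintype n] [DecidableEq n] {A : Matrix n n ℂ}
    (hA : A.IsHermitian) {μ : ℝ} {x : n → ℂ} (hx : x ≠ 0) (hAx : A *ᵥ x = (μ : ℂ) • x) :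
    ∃ i, hA.eigenvalues i = μ := by
  by_contra hcon
  push_neg at hcon
  have hdet : (A - (μ:ℂ) • 1).det = 0 := by
    rw [← Matrix.exists_mulVec_eq_zero_iff]
    refine ⟨x, hx, ?_⟩
    rw [Matrix.sub_mulVec, hAx, Matrix.smul_mulVec, Matrix.one_mulVec, sub_self]
  set U : Matrix n n ℂ := (hA.eigenvectorUnitary : Matrix n n ℂ) with hUdef
  have hU : U * star U = 1 := Matrix.mem_unitaryGroup_iff.mp (hA.eigenvectorUnitary).2
  have key : A - (μ:ℂ) • 1
      = U * (Matrix.diagonal (fun i => (hA.eigenvalues i : ℂ) - μ)) * star U := by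
    have h1 : Matrix.diagonal (fun i => (hA.eigenvalues i : ℂ) - μ)
        = Matrix.diagonal (RCLike.ofReal ∘ hA.eigenvalues) - (μ:ℂ) • 1 := by
      rw [Matrix.smul_one_eq_diagonal, ← Matrix.diagonal_sub]
      rfl
    rw [h1, Matrix.mul_sub, Matrix.sub_mul]
    conv_lhs => rw [hA.spectral_theorem, Unitary.conjStarAlgAut_apply, ← hUdef]
    congr 1
    rw [Matrix.mul_smul, Matrix.smul_mul, mul_one, hU]
  rw [key, Matrix.det_mul, Matrix.det_mul] at hdet
  have : (Matrix.diagonal (fun i => (hA.eigenvalues i : ℂ) - μ)).det = 0 := by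
    rcases mul_eq_zero.mp hdet with h | h
    · rcases mul_eq_zero.mp h with h' | h'
      · exfalso
        have := congrArg Matrix.det hU
        rw [Matrix.det_mul, Matrix.det_one, h', zero_mul] at this
        exact zero_ne_one this
      · exact h'
    · exfalso
      have := congrArg Matrix.det hU
      rw [Matrix.det_mul, Matrix.det_one, h, mul_zero] at this
      exact zero_ne_one this
  rw [Matrix.det_diagonal, Finset.prod_eq_zero_iff] at this
  obtain ⟨i, -, hi⟩ := this
  exact hcon i (by exact_mod_cast sub_eq_zero.mp hi)


open Matrix in
lemma walkGain_nil {G : SimpleGraph V} {u : V} (φ : V → V → ℂ) :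
    walkGain φ (SimpleGraph.Walk.nil : G.Walk u u) = 1 := by simp [walkGain]

lemma walkGain_cons {G : SimpleGraph V} {u w v : V} (φ : V → V → ℂ) (h : G.Adj u w)
    (p : G.Walk w v) : walkGain φ (SimpleGraph.Walk.cons h p) = φ u w * walkGain φ p := by
  simp [walkGain]

lemma walkGain_telescope {G : SimpleGraph V} {φ : V → V → ℂ} {f : V → ℂ}
    (hf : ∀ v, f v ≠ 0) (h : ∀ a b, G.Adj a b → φ a b = f a / f b) :
    ∀ {u v : V} (p : G.Walk u v), walkGain φ p = f u / f v := by
  intro u v p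
  induction p with
  | nil => rw [walkGain_nil, div_self (hf _)]
  | @cons u w v hadj p ih =>
    rw [walkGain_cons, ih, h _ _ hadj, div_mul_div_comm, mul_comm (f u) (f w),
      mul_div_mul_left _ _ (hf w)]


open Matrix in
lemma sum_sq_eig {p q : ℕ}
    (φ : (Fin p ⊕ Fin q) → (Fin p ⊕ Fin q) → ℂ)
    (hφ : IsGain (completeBipartiteGraph (Fin p) (Fin q)) φ)
    (hA : (gainAdj (completeBipartiteGraph (Fin p) (Fin q)) φ).IsHermitian) :
    ∑ i, (hA.eigenvalues i)^2 = 2 * (p * q) := by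
  set G := completeBipartiteGraph (Fin p) (Fin q)
  set A := gainAdj G φ with hAdef
  set U : Matrix (Fin p ⊕ Fin q) (Fin p ⊕ Fin q) ℂ := (hA.eigenvectorUnitary : Matrix (Fin p ⊕ Fin q) (Fin p ⊕ Fin q) ℂ) with hUdef
  set D : Matrix (Fin p ⊕ Fin q) (Fin p ⊕ Fin q) ℂ := Matrix.diagonal (RCLike.ofReal ∘ hA.eigenvalues) with hDdef
  have hU : U * star U = 1 := Matrix.mem_unitaryGroup_iff.mp (hA.eigenvectorUnitary).2
  have hU' : star U * U = 1 := Matrix.mem_unitaryGroup_iff'.mp (hA.eigenvectorUnitary).2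
  have h1 : (A * A).trace = (D * D).trace := by
    conv_lhs => rw [hA.spectral_theorem, Unitary.conjStarAlgAut_apply, ← hUdef, ← hDdef]
    rw [show U * D * star U * (U * D * star U) = U * (D * D) * star U by
      simp only [Matrix.mul_assoc]
      rw [← Matrix.mul_assoc (star U) U, hU', Matrix.one_mul]]
    rw [Matrix.trace_mul_comm (U * (D * D)) (star U), ← Matrix.mul_assoc, hU', Matrix.one_mul]
  have h2 : (D * D).trace = ((∑ i, (hA.eigenvalues i)^2 : ℝ) : ℂ) := by
    rw [hDdef, Matrix.diagonal_mul_diagonal, Matrix.trace_diagonal]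
    push_cast
    exact Finset.sum_congr rfl fun i _ => (sq _).symm
  have h3 : (A * A).trace = ((2 * (p * q) : ℝ) : ℂ) := by
    have hentry : ∀ u v, A u v * A v u = if G.Adj u v then (1:ℂ) else 0 := by
      intro u v
      by_cases h : G.Adj u v
      · simp [hAdef, gainAdj, h, h.symm, hφ.2 u v h]
      · have h' : ¬ G.Adj v u := fun hh => h hh.symm
        simp [hAdef, gainAdj, h, h']
    have : (A * A).trace = ∑ u, ∑ v, A u v * A v u := by
      simp [Matrix.trace, Matrix.diag, Matrix.mul_apply]
    rw [this]
    simp only [hentry]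
    rw [Fintype.sum_sum_type]
    simp only [Fintype.sum_sum_type]
    have hadj1 : ∀ (a : Fin p) (b : Fin q), G.Adj (Sum.inl a) (Sum.inr b) := by
      intro a b; simp [G, completeBipartiteGraph]
    have hadj2 : ∀ (a : Fin p) (b : Fin q), G.Adj (Sum.inr b) (Sum.inl a) := by
      intro a b; simp [G, completeBipartiteGraph]
    have hnadj1 : ∀ (a a' : Fin p), ¬ G.Adj (Sum.inl a) (Sum.inl a') := by
      intro a a'; simp [G, completeBipartiteGraph]
    have hnadj2 : ∀ (b b' : Fin q), ¬ G.Adj (Sum.inr b) (Sum.inr b') := by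
      intro b b'; simp [G, completeBipartiteGraph]
    simp only [if_pos (hadj1 _ _), if_pos (hadj2 _ _), if_neg (hnadj1 _ _), if_neg (hnadj2 _ _)]
    simp
    push_cast
    ring
  have := h1.trans h2
  rw [h3] at this
  exact_mod_cast this.symm


open Matrix in
lemma eig_le {p q : ℕ}
    (φ : (Fin p ⊕ Fin q) → (Fin p ⊕ Fin q) → ℂ)
    (hφ : IsGain (completeBipartiteGraph (Fin p) (Fin q)) φ)
    (hA : (gainAdj (completeBipartiteGraph (Fin p) (Fin q)) φ).IsHermitian)
    (i : Fin p ⊕ Fin q) : hA.eigenvalues i ≤ Real.sqrt (p * q) := by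
  by_cases hneg : hA.eigenvalues i ≤ 0
  · exact hneg.trans (Real.sqrt_nonneg _)
  push_neg at hneg
  set G := completeBipartiteGraph (Fin p) (Fin q) with hGdef
  set A := gainAdj G φ with hAdef
  set lam := hA.eigenvalues i with hlamdef
  set x : (Fin p ⊕ Fin q) → ℂ := ⇑(hA.eigenvectorBasis i) with hxdef
  have hx : A *ᵥ x = ((lam : ℝ) : ℂ) • x := by
    rw [hA.mulVec_eigenvectorBasis i]
    funext v
    simp only [Pi.smul_apply, Complex.real_smul, smul_eq_mul]
    rfl
  set ε : (Fin p ⊕ Fin q) → ℂ := Sum.elim (fun _ => 1) (fun _ => -1) with hεdef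
  set w : (Fin p ⊕ Fin q) → ℂ := fun v => ε v * x v with hwdef
  have hxne : x ≠ 0 := by
    intro h
    apply hA.eigenvectorBasis.orthonormal.ne_zero i
    apply PiLp.ext
    intro v
    exact congrFun h v
  have hwne : w ≠ 0 := by
    intro h
    apply hxne
    funext v
    have := congrFun h v
    rcases v with a | a
    · simpa [hwdef, hεdef] using this
    · simpa [hwdef, hεdef] using this
  have hAw : A *ᵥ w = ((-lam : ℝ) : ℂ) • w := by
    funext u
    have key : ∀ v, A u v * (ε v * x v) = -(ε u) * (A u v * x v) := by
      intro v
      rcases u with a | a <;> rcases v with b | b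
      · have : A (Sum.inl a) (Sum.inl b) = 0 := by
          simp [hAdef, gainAdj, hGdef, completeBipartiteGraph]
        rw [this]; ring
      · simp only [hεdef, Sum.elim_inl, Sum.elim_inr]; ring
      · simp only [hεdef, Sum.elim_inl, Sum.elim_inr]; ring
      · have : A (Sum.inr a) (Sum.inr b) = 0 := by
          simp [hAdef, gainAdj, hGdef, completeBipartiteGraph]
        rw [this]; ring
    have h1 : (A *ᵥ w) u = ∑ v, A u v * (ε v * x v) := by
      simp [Matrix.mulVec, dotProduct, hwdef]
    rw [h1]
    simp only [key]
    rw [← Finset.mul_sum]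
    have h2 : ∑ v, A u v * x v = (A *ᵥ x) u := by
      simp [Matrix.mulVec, dotProduct]
    rw [h2, hx]
    simp only [Pi.smul_apply, smul_eq_mul, hwdef]
    push_cast
    ring
  obtain ⟨j, hj⟩ := eig_index hA hwne hAw
  have hij : i ≠ j := by
    intro h
    rw [← h, ← hlamdef] at hj
    have : lam = 0 := by linarith
    exact absurd this (by positivity)
  have hsum := sum_sq_eig φ hφ hA
  have hle : hA.eigenvalues i ^ 2 + hA.eigenvalues j ^ 2 ≤ ∑ k, hA.eigenvalues k ^ 2 := by
    have hsub := Finset.sum_le_sum_of_subset_of_nonneg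
      (Finset.subset_univ ({i, j} : Finset (Fin p ⊕ Fin q)))
      (fun k _ _ => sq_nonneg (hA.eigenvalues k))
    rwa [Finset.sum_pair hij] at hsub
  rw [hj, ← hlamdef, hsum] at hle
  have hsq : lam ^ 2 ≤ (p : ℝ) * q := by nlinarith
  exact (Real.le_sqrt' hneg).mpr hsq


open Matrix in
lemma balanced_exists {p q : ℕ} (hp : 0 < p) (hq : 0 < q)
    (φ : (Fin p ⊕ Fin q) → (Fin p ⊕ Fin q) → ℂ)
    (hφ : IsGain (completeBipartiteGraph (Fin p) (Fin q)) φ)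
    (hA : (gainAdj (completeBipartiteGraph (Fin p) (Fin q)) φ).IsHermitian)
    (hbal : IsBalanced (completeBipartiteGraph (Fin p) (Fin q)) φ) :
    ∃ i, hA.eigenvalues i = Real.sqrt (p * q) := by
  set G := completeBipartiteGraph (Fin p) (Fin q) with hGdef
  set A := gainAdj G φ with hAdef
  have hadj : ∀ (a : Fin p) (b : Fin q), G.Adj (Sum.inl a) (Sum.inr b) := by
    intro a b; simp [hGdef, completeBipartiteGraph]
  have hadj' : ∀ (a : Fin p) (b : Fin q), G.Adj (Sum.inr b) (Sum.inl a) := by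
    intro a b; simp [hGdef, completeBipartiteGraph]
  have hne : ∀ u v, G.Adj u v → φ u v ≠ 0 := by
    intro u v h h0
    have := hφ.1 u v h
    rw [h0] at this
    simp at this
  have hinv : ∀ u v, G.Adj u v → φ v u = (φ u v)⁻¹ := by
    intro u v h
    have h2 := hφ.2 u v h
    field_simp [hne u v h]
    linear_combination h2
  set a0 : Fin p := ⟨0, hp⟩
  set b0 : Fin q := ⟨0, hq⟩
  set l0 : Fin p ⊕ Fin q := Sum.inl a0 with hl0
  set r0 : Fin p ⊕ Fin q := Sum.inr b0 with hr0
  set θ : (Fin p ⊕ Fin q) → ℂ :=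
    Sum.elim (fun a => φ (Sum.inl a) r0) (fun b => φ (Sum.inr b) l0 * φ l0 r0) with hθdef
  have hθne : ∀ v, θ v ≠ 0 := by
    intro v
    rcases v with a | b
    · exact hne _ _ (hadj a b0)
    · exact mul_ne_zero (hne _ _ (hadj' a0 b)) (hne _ _ (hadj a0 b0))
  have key : ∀ a b, φ (Sum.inl a) (Sum.inr b) = θ (Sum.inl a) * (θ (Sum.inr b))⁻¹ := by
    intro a b
    by_cases hb : b = b0
    · subst hb
      have h1 : θ (Sum.inr b0) = 1 := by
        simp only [hθdef, Sum.elim_inr]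
        rw [← hr0, mul_comm]
        exact hφ.2 l0 r0 (hadj a0 b0)
      rw [h1, inv_one, mul_one]
      simp [hθdef]
      rfl
    · by_cases ha : a = a0
      · subst ha
        simp only [hθdef, Sum.elim_inl, Sum.elim_inr]
        rw [hinv _ _ (hadj' a0 b), mul_inv,
          mul_comm ((φ (Sum.inr b) l0)⁻¹) ((φ l0 r0)⁻¹), ← mul_assoc,
          mul_inv_cancel₀ (hne _ _ (hadj a0 b0)), one_mul]
      · -- genuine 4-cycle
        have h1 : G.Adj (Sum.inl a) (Sum.inr b) := hadj a b
        have h2 : G.Adj (Sum.inr b) l0 := hadj' a0 b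
        have h3 : G.Adj l0 r0 := hadj a0 b0
        have h4 : G.Adj r0 (Sum.inl a) := hadj' a b0
        have hcyc : (SimpleGraph.Walk.cons h1 (SimpleGraph.Walk.cons h2
            (SimpleGraph.Walk.cons h3 (SimpleGraph.Walk.cons h4 SimpleGraph.Walk.nil)))).IsCycle := by
          rw [SimpleGraph.Walk.isCycle_def]
          refine ⟨?_, by simp, ?_⟩
          · rw [SimpleGraph.Walk.isTrail_def]
            simp [Sym2.eq_iff]
            simp [hl0, hr0, ha, hb, eq_comm]
          · simp
            simp [hl0, hr0, ha, hb, eq_comm]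
        have hgain := hbal _ _ hcyc
        have hgc : walkGain φ (SimpleGraph.Walk.cons h1 (SimpleGraph.Walk.cons h2
            (SimpleGraph.Walk.cons h3 (SimpleGraph.Walk.cons h4 SimpleGraph.Walk.nil))))
            = φ (Sum.inl a) (Sum.inr b) * (φ (Sum.inr b) l0 * (φ l0 r0 * φ r0 (Sum.inl a))) := by
          simp [walkGain]
        rw [hgc] at hgain
        rw [hinv _ _ (hadj a b0)] at hgain
        simp only [hθdef, Sum.elim_inl, Sum.elim_inr]
        have hz2 := hne _ _ h2
        have hz3 := hne _ _ h3
        have hz4 := hne _ _ (hadj a b0)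
        field_simp at hgain ⊢
        linear_combination hgain
  set x : (Fin p ⊕ Fin q) → ℂ :=
    Sum.elim (fun a => ((Real.sqrt q : ℝ) : ℂ) * θ (Sum.inl a))
      (fun b => ((Real.sqrt p : ℝ) : ℂ) * θ (Sum.inr b)) with hxdef
  have hsq : ((Real.sqrt q : ℝ) : ℂ) ≠ 0 :=
    Complex.ofReal_ne_zero.mpr (ne_of_gt (Real.sqrt_pos.mpr (by positivity)))
  have hsp : ((Real.sqrt p : ℝ) : ℂ) ≠ 0 :=
    Complex.ofReal_ne_zero.mpr (ne_of_gt (Real.sqrt_pos.mpr (by positivity)))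
  have hxne : x ≠ 0 := by
    intro h
    have h0 := congrFun h (Sum.inl a0)
    simp only [hxdef, Sum.elim_inl, Pi.zero_apply] at h0
    rcases mul_eq_zero.mp h0 with h' | h'
    · exact hsq h'
    · exact hθne _ h'
  have hA1 : ∀ (a : Fin p) (b : Fin q), A (Sum.inl a) (Sum.inr b) = φ (Sum.inl a) (Sum.inr b) := by
    intro a b; simp [hAdef, gainAdj, hadj a b]
  have hA2 : ∀ (a : Fin p) (b : Fin q), A (Sum.inr b) (Sum.inl a) = φ (Sum.inr b) (Sum.inl a) := by
    intro a b; simp [hAdef, gainAdj, hadj' a b]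
  have hA0 : ∀ (a a' : Fin p), A (Sum.inl a) (Sum.inl a') = 0 := by
    intro a a'; simp [hAdef, gainAdj, hGdef, completeBipartiteGraph]
  have hA0' : ∀ (b b' : Fin q), A (Sum.inr b) (Sum.inr b') = 0 := by
    intro b b'; simp [hAdef, gainAdj, hGdef, completeBipartiteGraph]
  have hr1 : ((q : ℝ) : ℂ) * ((Real.sqrt p : ℝ) : ℂ)
      = ((Real.sqrt ((p : ℝ) * q) : ℝ) : ℂ) * ((Real.sqrt q : ℝ) : ℂ) := by
    have : (q : ℝ) * Real.sqrt p = Real.sqrt ((p : ℝ) * q) * Real.sqrt q := by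
      rw [Real.sqrt_mul (Nat.cast_nonneg p), mul_assoc,
        Real.mul_self_sqrt (Nat.cast_nonneg q), mul_comm]
    exact_mod_cast congrArg Complex.ofReal this
  have hr2 : ((p : ℝ) : ℂ) * ((Real.sqrt q : ℝ) : ℂ)
      = ((Real.sqrt ((p : ℝ) * q) : ℝ) : ℂ) * ((Real.sqrt p : ℝ) : ℂ) := by
    have : (p : ℝ) * Real.sqrt q = Real.sqrt ((p : ℝ) * q) * Real.sqrt p := by
      rw [Real.sqrt_mul (Nat.cast_nonneg p), mul_comm (Real.sqrt (p:ℝ)) _, mul_assoc,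
        Real.mul_self_sqrt (Nat.cast_nonneg p), mul_comm]
    exact_mod_cast congrArg Complex.ofReal this
  have hmul : A *ᵥ x = ((Real.sqrt ((p : ℝ) * q) : ℝ) : ℂ) • x := by
    funext u
    have hsplit : (A *ᵥ x) u = ∑ a', A u (Sum.inl a') * x (Sum.inl a')
        + ∑ b', A u (Sum.inr b') * x (Sum.inr b') := by
      simp [Matrix.mulVec, dotProduct, Fintype.sum_sum_type]
    rcases u with a | b
    · rw [hsplit]
      have t1 : ∑ a', A (Sum.inl a) (Sum.inl a') * x (Sum.inl a') = 0 := by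
        simp [hA0]
      have t2 : ∀ b', A (Sum.inl a) (Sum.inr b') * x (Sum.inr b')
          = ((Real.sqrt p : ℝ) : ℂ) * θ (Sum.inl a) := by
        intro b'
        rw [hA1, key a b']
        simp only [hxdef, Sum.elim_inr]
        field_simp [hθne (Sum.inr b')]
      rw [t1, zero_add]
      rw [Finset.sum_congr rfl (fun b' _ => t2 b'), Finset.sum_const, Finset.card_univ,
        Fintype.card_fin, nsmul_eq_mul]
      simp only [Pi.smul_apply, hxdef, Sum.elim_inl, smul_eq_mul]
      rw [← mul_assoc, ← mul_assoc]
      congr 1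

    · rw [hsplit]
      have t1 : ∑ b', A (Sum.inr b) (Sum.inr b') * x (Sum.inr b') = 0 := by
        simp [hA0']
      have t2 : ∀ a', A (Sum.inr b) (Sum.inl a') * x (Sum.inl a')
          = ((Real.sqrt q : ℝ) : ℂ) * θ (Sum.inr b) := by
        intro a'
        rw [hA2, hinv _ _ (hadj a' b), key a']
        simp only [hxdef, Sum.elim_inl]
        field_simp [hθne (Sum.inr b), hθne (Sum.inl a')]
      rw [t1, add_zero]
      rw [Finset.sum_congr rfl (fun a' _ => t2 a'), Finset.sum_const, Finset.card_univ,
        Fintype.card_fin, nsmul_eq_mul]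
      simp only [Pi.smul_apply, hxdef, Sum.elim_inr, smul_eq_mul]
      rw [← mul_assoc, ← mul_assoc]
      congr 1

  exact eig_index hA hxne hmul


open Matrix in
lemma exists_balanced {p q : ℕ} (hp : 0 < p) (hq : 0 < q)
    (φ : (Fin p ⊕ Fin q) → (Fin p ⊕ Fin q) → ℂ)
    (hφ : IsGain (completeBipartiteGraph (Fin p) (Fin q)) φ)
    (hA : (gainAdj (completeBipartiteGraph (Fin p) (Fin q)) φ).IsHermitian)
    (hex : ∃ i, hA.eigenvalues i = Real.sqrt (p * q)) :
    IsBalanced (completeBipartiteGraph (Fin p) (Fin q)) φ := by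
  set G := completeBipartiteGraph (Fin p) (Fin q) with hGdef
  set A := gainAdj G φ with hAdef
  have hadj : ∀ (a : Fin p) (b : Fin q), G.Adj (Sum.inl a) (Sum.inr b) := by
    intro a b; simp [hGdef, completeBipartiteGraph]
  have hadj' : ∀ (a : Fin p) (b : Fin q), G.Adj (Sum.inr b) (Sum.inl a) := by
    intro a b; simp [hGdef, completeBipartiteGraph]
  have hnadj : ∀ (a a' : Fin p), ¬ G.Adj (Sum.inl a) (Sum.inl a') := by
    intro a a'; simp [hGdef, completeBipartiteGraph]
  have hnadj' : ∀ (b b' : Fin q), ¬ G.Adj (Sum.inr b) (Sum.inr b') := by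
    intro b b'; simp [hGdef, completeBipartiteGraph]
  have hne : ∀ u v, G.Adj u v → φ u v ≠ 0 := by
    intro u v h h0
    have := hφ.1 u v h
    rw [h0] at this
    simp at this
  have hinv : ∀ u v, G.Adj u v → φ v u = (φ u v)⁻¹ := by
    intro u v h
    have h2 := hφ.2 u v h
    field_simp [hne u v h]
    linear_combination h2
  have hA1 : ∀ (a : Fin p) (b : Fin q), A (Sum.inl a) (Sum.inr b) = φ (Sum.inl a) (Sum.inr b) := by
    intro a b; simp [hAdef, gainAdj, hadj a b]
  have hA2 : ∀ (a : Fin p) (b : Fin q), A (Sum.inr b) (Sum.inl a) = φ (Sum.inr b) (Sum.inl a) := by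
    intro a b; simp [hAdef, gainAdj, hadj' a b]
  have hA0 : ∀ (a a' : Fin p), A (Sum.inl a) (Sum.inl a') = 0 := by
    intro a a'; simp [hAdef, gainAdj, hnadj a a']
  have hA0' : ∀ (b b' : Fin q), A (Sum.inr b) (Sum.inr b') = 0 := by
    intro b b'; simp [hAdef, gainAdj, hnadj' b b']
  obtain ⟨i, hi⟩ := hex
  set lam : ℝ := Real.sqrt ((p : ℝ) * q) with hlamdef
  have hlampos : 0 < lam := Real.sqrt_pos.mpr (by positivity)
  have hlamsq : lam ^ 2 = (p : ℝ) * q := Real.sq_sqrt (by positivity)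
  set x : (Fin p ⊕ Fin q) → ℂ := ⇑(hA.eigenvectorBasis i) with hxdef
  have hx : A *ᵥ x = ((lam : ℝ) : ℂ) • x := by
    rw [hxdef, hA.mulVec_eigenvectorBasis i]
    funext v
    simp only [Pi.smul_apply, Complex.real_smul, smul_eq_mul, hi]
  have hxne : x ≠ 0 := by
    intro h
    apply hA.eigenvectorBasis.orthonormal.ne_zero i
    apply PiLp.ext
    intro v
    exact congrFun h v
  have E1 : ∀ a, ∑ b, φ (Sum.inl a) (Sum.inr b) * x (Sum.inr b) = (lam : ℂ) * x (Sum.inl a) := by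
    intro a
    have h0 := congrFun hx (Sum.inl a)
    have hsplit : (A *ᵥ x) (Sum.inl a) = ∑ a', A (Sum.inl a) (Sum.inl a') * x (Sum.inl a')
        + ∑ b', A (Sum.inl a) (Sum.inr b') * x (Sum.inr b') := by
      simp [Matrix.mulVec, dotProduct, Fintype.sum_sum_type]
    rw [hsplit] at h0
    simp only [hA0, hA1, zero_mul, Finset.sum_const_zero, zero_add, Pi.smul_apply,
      smul_eq_mul] at h0
    exact h0
  have E2 : ∀ b, ∑ a, φ (Sum.inr b) (Sum.inl a) * x (Sum.inl a) = (lam : ℂ) * x (Sum.inr b) := by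
    intro b
    have h0 := congrFun hx (Sum.inr b)
    have hsplit : (A *ᵥ x) (Sum.inr b) = ∑ a', A (Sum.inr b) (Sum.inl a') * x (Sum.inl a')
        + ∑ b', A (Sum.inr b) (Sum.inr b') * x (Sum.inr b') := by
      simp [Matrix.mulVec, dotProduct, Fintype.sum_sum_type]
    rw [hsplit] at h0
    simp only [hA0', hA2, zero_mul, Finset.sum_const_zero, add_zero, Pi.smul_apply,
      smul_eq_mul] at h0
    exact h0
  -- Euclidean space vectors
  set L : EuclideanSpace ℂ (Fin p) := WithLp.toLp 2 (fun a => x (Sum.inl a)) with hLdef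
  set R : EuclideanSpace ℂ (Fin q) := WithLp.toLp 2 (fun b => x (Sum.inr b)) with hRdef
  set w : Fin p → EuclideanSpace ℂ (Fin q) :=
    fun a => WithLp.toLp 2 (fun b => (starRingEnd ℂ) (φ (Sum.inl a) (Sum.inr b))) with hwdef
  set w' : Fin q → EuclideanSpace ℂ (Fin p) :=
    fun b => WithLp.toLp 2 (fun a => (starRingEnd ℂ) (φ (Sum.inr b) (Sum.inl a))) with hw'def
  have hwnorm : ∀ a, ‖w a‖ = Real.sqrt q := by
    intro a
    rw [EuclideanSpace.norm_eq]
    congr 1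
    have : ∀ b : Fin q, ‖w a b‖ ^ 2 = 1 := by
      intro b
      rw [hwdef]
      simp only [PiLp.toLp_apply, RCLike.norm_conj]
      rw [hφ.1 _ _ (hadj a b), one_pow]
    rw [Finset.sum_congr rfl (fun b _ => this b)]
    simp
  have hw'norm : ∀ b, ‖w' b‖ = Real.sqrt p := by
    intro b
    rw [EuclideanSpace.norm_eq]
    congr 1
    have : ∀ a : Fin p, ‖w' b a‖ ^ 2 = 1 := by
      intro a
      rw [hw'def]
      simp only [PiLp.toLp_apply, RCLike.norm_conj]
      rw [hφ.1 _ _ (hadj' a b), one_pow]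
    rw [Finset.sum_congr rfl (fun a _ => this a)]
    simp
  have hinner1 : ∀ a, (inner ℂ (w a) R : ℂ) = (lam : ℂ) * L a := by
    intro a
    rw [PiLp.inner_apply]
    simp only [RCLike.inner_apply, hwdef, PiLp.toLp_apply, RingHomCompTriple.comp_apply, RingHom.id_apply,
      starRingEnd_self_apply]
    rw [← E1 a]
    exact Finset.sum_congr rfl fun b _ => mul_comm _ _

  have hinner2 : ∀ b, (inner ℂ (w' b) L : ℂ) = (lam : ℂ) * R b := by
    intro b
    rw [PiLp.inner_apply]
    simp only [RCLike.inner_apply, hw'def, PiLp.toLp_apply, starRingEnd_self_apply]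
    rw [← E2 b]
    exact Finset.sum_congr rfl fun a _ => mul_comm _ _

  have hLsq : ‖L‖ ^ 2 = ∑ a, ‖L a‖ ^ 2 := by
    rw [EuclideanSpace.norm_eq, Real.sq_sqrt (Finset.sum_nonneg fun a _ => sq_nonneg _)]
  have hRsq : ‖R‖ ^ 2 = ∑ b, ‖R b‖ ^ 2 := by
    rw [EuclideanSpace.norm_eq, Real.sq_sqrt (Finset.sum_nonneg fun b _ => sq_nonneg _)]
  have hcs1 : ∀ a, lam ^ 2 * ‖L a‖ ^ 2 ≤ (q : ℝ) * ‖R‖ ^ 2 := by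
    intro a
    have h := norm_inner_le_norm (𝕜 := ℂ) (w a) R
    rw [hinner1 a, hwnorm a] at h
    have h2 : lam * ‖L a‖ ≤ Real.sqrt q * ‖R‖ := by
      have hn : ‖(lam : ℂ) * L a‖ = lam * ‖L a‖ := by
        rw [norm_mul, Complex.norm_real, Real.norm_eq_abs, abs_of_pos hlampos]
      rwa [hn] at h
    have h3 := mul_self_le_mul_self (by positivity) h2
    calc lam ^ 2 * ‖L a‖ ^ 2 = (lam * ‖L a‖) * (lam * ‖L a‖) := by ring
      _ ≤ (Real.sqrt q * ‖R‖) * (Real.sqrt q * ‖R‖) := h3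
      _ = (q : ℝ) * ‖R‖ ^ 2 := by
          rw [show (Real.sqrt ↑q * ‖R‖) * (Real.sqrt ↑q * ‖R‖)
              = (Real.sqrt ↑q * Real.sqrt ↑q) * ‖R‖ ^ 2 by ring,
            Real.mul_self_sqrt (Nat.cast_nonneg q)]
  have hcs2 : ∀ b, lam ^ 2 * ‖R b‖ ^ 2 ≤ (p : ℝ) * ‖L‖ ^ 2 := by
    intro b
    have h := norm_inner_le_norm (𝕜 := ℂ) (w' b) L
    rw [hinner2 b, hw'norm b] at h
    have h2 : lam * ‖R b‖ ≤ Real.sqrt p * ‖L‖ := by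
      have hn : ‖(lam : ℂ) * R b‖ = lam * ‖R b‖ := by
        rw [norm_mul, Complex.norm_real, Real.norm_eq_abs, abs_of_pos hlampos]
      rwa [hn] at h
    have h3 := mul_self_le_mul_self (by positivity) h2
    calc lam ^ 2 * ‖R b‖ ^ 2 = (lam * ‖R b‖) * (lam * ‖R b‖) := by ring
      _ ≤ (Real.sqrt p * ‖L‖) * (Real.sqrt p * ‖L‖) := h3
      _ = (p : ℝ) * ‖L‖ ^ 2 := by
          rw [show (Real.sqrt ↑p * ‖L‖) * (Real.sqrt ↑p * ‖L‖)
              = (Real.sqrt ↑p * Real.sqrt ↑p) * ‖L‖ ^ 2 by ring,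
            Real.mul_self_sqrt (Nat.cast_nonneg p)]
  have hp' : (0 : ℝ) < p := by exact_mod_cast hp
  have hq' : (0 : ℝ) < q := by exact_mod_cast hq
  have hsum1 : lam ^ 2 * ‖L‖ ^ 2 ≤ (p : ℝ) * ((q : ℝ) * ‖R‖ ^ 2) := by
    rw [hLsq, Finset.mul_sum]
    calc ∑ a, lam ^ 2 * ‖L a‖ ^ 2 ≤ ∑ _a : Fin p, (q : ℝ) * ‖R‖ ^ 2 :=
          Finset.sum_le_sum fun a _ => hcs1 a
      _ = (p : ℝ) * ((q : ℝ) * ‖R‖ ^ 2) := by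
          rw [Finset.sum_const, Finset.card_univ, Fintype.card_fin, nsmul_eq_mul]
  have hsum2 : lam ^ 2 * ‖R‖ ^ 2 ≤ (q : ℝ) * ((p : ℝ) * ‖L‖ ^ 2) := by
    rw [hRsq, Finset.mul_sum]
    calc ∑ b, lam ^ 2 * ‖R b‖ ^ 2 ≤ ∑ _b : Fin q, (p : ℝ) * ‖L‖ ^ 2 :=
          Finset.sum_le_sum fun b _ => hcs2 b
      _ = (q : ℝ) * ((p : ℝ) * ‖L‖ ^ 2) := by
          rw [Finset.sum_const, Finset.card_univ, Fintype.card_fin, nsmul_eq_mul]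
  rw [hlamsq] at hsum1 hsum2
  have hLR : ‖L‖ ^ 2 = ‖R‖ ^ 2 := by
    rw [← mul_assoc] at hsum1
    rw [← mul_assoc, mul_comm (q : ℝ) (p : ℝ)] at hsum2
    have hpq : (0 : ℝ) < (p : ℝ) * q := by positivity
    exact le_antisymm (le_of_mul_le_mul_left hsum1 hpq) (le_of_mul_le_mul_left hsum2 hpq)
  have hRpos : 0 < ‖R‖ := by
    rcases (norm_nonneg R).lt_or_eq with h | h
    · exact h
    · exfalso
      apply hxne
      have hR0 : R = 0 := norm_eq_zero.mp h.symm
      have hL0 : L = 0 := by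
        rw [← norm_eq_zero]
        have : ‖L‖ ^ 2 = 0 := by rw [hLR, ← h]; ring
        exact pow_eq_zero_iff (n := 2) (by norm_num) |>.mp this
      funext v
      rcases v with a | b
      · exact congrFun (congrArg (fun (z : EuclideanSpace ℂ (Fin p)) b => z b) hL0) a
      · exact congrFun (congrArg (fun (z : EuclideanSpace ℂ (Fin q)) b => z b) hR0) b
  have hRne : R ≠ 0 := by
    intro h
    rw [h, norm_zero] at hRpos
    exact lt_irrefl _ hRpos
  have hall : ∀ a, lam ^ 2 * ‖L a‖ ^ 2 = (q : ℝ) * ‖R‖ ^ 2 := by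
    by_contra hc
    push_neg at hc
    obtain ⟨a₀, ha₀⟩ := hc
    have hlt := lt_of_le_of_ne (hcs1 a₀) ha₀
    have hstrict : ∑ a, lam ^ 2 * ‖L a‖ ^ 2 < ∑ _a : Fin p, (q : ℝ) * ‖R‖ ^ 2 :=
      Finset.sum_lt_sum (fun a _ => hcs1 a) ⟨a₀, Finset.mem_univ _, hlt⟩
    rw [Finset.sum_const, Finset.card_univ, Fintype.card_fin, nsmul_eq_mul] at hstrict
    have hsum : ∑ a, lam ^ 2 * ‖L a‖ ^ 2 = lam ^ 2 * ‖L‖ ^ 2 := by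
      rw [hLsq, Finset.mul_sum]
    rw [hsum, hlamsq, hLR] at hstrict
    nlinarith
  have heq : ∀ a, ‖(inner ℂ (w a) R : ℂ)‖ = ‖w a‖ * ‖R‖ := by
    intro a
    rw [hinner1 a, hwnorm a, norm_mul, Complex.norm_real, Real.norm_eq_abs, abs_of_pos hlampos]
    have h2 : (lam * ‖L a‖) ^ 2 = (Real.sqrt q * ‖R‖) ^ 2 := by
      rw [mul_pow, mul_pow, Real.sq_sqrt (Nat.cast_nonneg q)]
      exact hall a
    have hnn1 : 0 ≤ lam * ‖L a‖ := by positivity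
    have hnn2 : 0 ≤ Real.sqrt ↑q * ‖R‖ := by positivity
    rw [← Real.sqrt_sq hnn1, ← Real.sqrt_sq hnn2, h2]
  have hwne : ∀ a, w a ≠ 0 := by
    intro a h
    have hn := hwnorm a
    rw [h, norm_zero] at hn
    exact (Real.sqrt_pos.mpr hq').ne' hn.symm
  have hchoice : ∀ a, ∃ cc : ℂ, cc ≠ 0 ∧ R = cc • w a := by
    intro a
    exact (norm_inner_eq_norm_iff (𝕜 := ℂ) (hwne a) hRne).mp (heq a)
  choose c hc0 hcR using hchoice
  have hcb : ∀ a b, x (Sum.inr b) = c a * (starRingEnd ℂ) (φ (Sum.inl a) (Sum.inr b)) := by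
    intro a b
    have h : R b = (c a • w a) b := by rw [← hcR a]
    simpa [hRdef, hwdef, PiLp.smul_apply, smul_eq_mul] using h
  have hstar : ∀ a b, (starRingEnd ℂ) (x (Sum.inr b))
      = (starRingEnd ℂ) (c a) * φ (Sum.inl a) (Sum.inr b) := by
    intro a b
    have h := congrArg (starRingEnd ℂ) (hcb a b)
    simpa using h
  have hxinr_ne : ∀ b, x (Sum.inr b) ≠ 0 := by
    intro b h
    have h1 := hcb ⟨0, hp⟩ b
    rw [h] at h1
    exact mul_ne_zero (hc0 ⟨0, hp⟩)
      (star_ne_zero.mpr (hne _ _ (hadj ⟨0, hp⟩ b))) h1.symm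
  set f : (Fin p ⊕ Fin q) → ℂ := Sum.elim (fun a => ((starRingEnd ℂ) (c a))⁻¹)
    (fun b => ((starRingEnd ℂ) (x (Sum.inr b)))⁻¹) with hfdef
  have hfne : ∀ v, f v ≠ 0 := by
    intro v
    rcases v with a | b
    · exact inv_ne_zero (star_ne_zero.mpr (hc0 a))
    · exact inv_ne_zero (star_ne_zero.mpr (hxinr_ne b))
  have hgainlr : ∀ a b, φ (Sum.inl a) (Sum.inr b) = f (Sum.inl a) / f (Sum.inr b) := by
    intro a b
    rw [hfdef]
    simp only [Sum.elim_inl, Sum.elim_inr]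
    have h := hstar a b
    have h1 : (starRingEnd ℂ) (c a) ≠ 0 := star_ne_zero.mpr (hc0 a)
    have h2 : (starRingEnd ℂ) (x (Sum.inr b)) ≠ 0 := star_ne_zero.mpr (hxinr_ne b)
    field_simp
    linear_combination -h
  have hgain : ∀ u v, G.Adj u v → φ u v = f u / f v := by
    intro u v huv
    rcases u with a | b <;> rcases v with a' | b'
    · exact absurd huv (hnadj _ _)
    · exact hgainlr a b'
    · rw [hinv _ _ (hadj a' b), hgainlr a' b, inv_div]
    · exact absurd huv (hnadj' _ _)
  intro v pc hpc
  rw [walkGain_telescope hfne hgain pc, div_self (hfne v)]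

/-- For a `𝕋`-gain graph on the complete bipartite graph `K_{p,q}`, the
largest eigenvalue satisfies `λ₁ ≤ √(pq)`, with equality iff `Φ` is balanced. -/
theorem completeBipartite_largest_eigenvalue {p q : ℕ} (hp : 0 < p) (hq : 0 < q)
    (φ : (Fin p ⊕ Fin q) → (Fin p ⊕ Fin q) → ℂ)
    (hφ : IsGain (completeBipartiteGraph (Fin p) (Fin q)) φ)
    (hA : (gainAdj (completeBipartiteGraph (Fin p) (Fin q)) φ).IsHermitian) :
    (∀ i, hA.eigenvalues i ≤ Real.sqrt (p * q)) ∧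
      ((∃ i, hA.eigenvalues i = Real.sqrt (p * q)) ↔
        IsBalanced (completeBipartiteGraph (Fin p) (Fin q)) φ) := by
  exact ⟨fun i => eig_le φ hφ hA i,
    ⟨fun h => exists_balanced hp hq φ hφ hA h, fun h => balanced_exists hp hq φ hφ hA h⟩⟩
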